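/- Let Σ be a nonempty finite type and P : Set (ℕ → Σ) a reactivity property. Then there exists u : List Σ → Option Bool such that: (a) for every infinite trace f, it is not the case that both {n | u (f↾n) = some true} and {n | u (f↾n) = some false} are infinite; (b) for every infinite trace f and every b : Bool, if {n | u (f↾n) = some b} is infinite and {n | u (f↾n) = some (!b)} is finite, then (b = true ↔ f ∈ P); and (c) for every finite trace s there exists an infinite trace f such that, writing b := decide (s·f ∈ P), the set {n | u ((s·f)↾n) = some b} is infinite and the set {n | u ((s·f)↾n) = some (!b)} is finite. -/

import Mathlib

/-- The length-`n` prefix of an infinite trace `f`. -/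
def pref {A : Type*} (f : ℕ → A) (n : ℕ) : List A := List.ofFn (fun i : Fin n => f i.1)

/-- The infinite trace obtained by prepending the finite trace `s` to the infinite trace `f`. -/
def ext {A : Type*} (s : List A) (f : ℕ → A) : ℕ → A :=
  fun n => if h : n < s.length then s.get ⟨n, h⟩ else f (n - s.length)

/-- `P` is a response property. -/
def Response {A : Type*} (P : Set (ℕ → A)) : Prop :=
  ∃ S : Set (List A), ∀ f : ℕ → A, f ∈ P ↔ {n : ℕ | pref f n ∈ S}.Infinite

/-- `P` is a persistence property. -/
def Persistence {A : Type*} (P : Set (ℕ → A)) : Prop :=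
  ∃ S : Set (List A), ∀ f : ℕ → A, f ∈ P ↔ ∃ N : ℕ, ∀ n ≥ N, pref f n ∈ S

/-- `P` is a reactivity property. -/
def Reactivity {A : Type*} (P : Set (ℕ → A)) : Prop :=
  ∃ k : ℕ, 1 ≤ k ∧ ∃ R Q : Fin k → Set (ℕ → A),
    (∀ i, Response (R i)) ∧ (∀ i, Persistence (Q i)) ∧ P = ⋂ i, (R i ∪ Q i)

attribute [local instance] Classical.propDecidable

namespace RMon
variable {A : Type*}

@[simp] lemma pref_length (f : ℕ → A) (n : ℕ) : (pref f n).length = n := by simp [pref]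

@[simp] lemma pref_getElem (f : ℕ → A) {n i : ℕ} (h : i < (pref f n).length) :
    (pref f n)[i] = f i := by simp [pref]

lemma pref_take (f : ℕ → A) {m n : ℕ} (h : m ≤ n) : (pref f n).take m = pref f m := by
  apply List.ext_getElem
  · simp [h]
  · intro i h1 h2
    simp [List.getElem_take]

lemma pref_prefix (f : ℕ → A) {m n : ℕ} (h : m ≤ n) : pref f m <+: pref f n := by
  rw [← pref_take f h]; exact List.take_prefix _ _

lemma prefix_pref_iff {f : ℕ → A} {s : List A} {n : ℕ} :
    s <+: pref f n ↔ s.length ≤ n ∧ pref f s.length = s := by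
  constructor
  · intro h
    have hl : s.length ≤ n := by simpa using h.length_le
    refine ⟨hl, ?_⟩
    apply List.ext_getElem (by simp)
    intro i h1 h2
    have := h.getElem h2
    simp at this ⊢
    exact this.symm
  · rintro ⟨h1, h2⟩
    rw [← h2]; exact pref_prefix f h1

lemma ext_eq_self {s : List A} {f : ℕ → A} (h : pref f s.length = s) :
    ext s (fun n => f (n + s.length)) = f := by
  funext j
  simp only [ext]
  by_cases hj : j < s.length
  · rw [dif_pos hj]
    rw [List.get_eq_getElem, List.getElem_of_eq h.symm hj]
    simp
  · rw [dif_neg hj]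
    congr 1
    omega

noncomputable def Wgen (N : ℕ) (C : Set (List A)) {k : ℕ} (I : Finset (Fin k))
    (D : Fin k → Set (List A)) : List A → Prop := fun t =>
  (∀ m, N ≤ m → m ≤ t.length → t.take m ∈ C) ∧
  ∀ i ∈ I, ∃ m, m ≤ t.length ∧ t.take m ∈ D i ∧
    ∀ m', m ≤ m' → (hm : m' < t.length) → ¬ Wgen N C I D (t.take m')
termination_by t => t.length
decreasing_by simp [List.length_take]; omega

lemma Wgen_iff (N : ℕ) (C : Set (List A)) {k : ℕ} (I : Finset (Fin k))
    (D : Fin k → Set (List A)) (t : List A) :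
    Wgen N C I D t ↔
      ((∀ m, N ≤ m → m ≤ t.length → t.take m ∈ C) ∧
      ∀ i ∈ I, ∃ m, m ≤ t.length ∧ t.take m ∈ D i ∧
        ∀ m', m ≤ m' → m' < t.length → ¬ Wgen N C I D (t.take m')) := by
  rw [Wgen]

def PieceSetGen (N : ℕ) (C : Set (List A)) {k : ℕ} (I : Finset (Fin k))
    (D : Fin k → Set (List A)) : Set (ℕ → A) :=
  {f | (∀ n, N ≤ n → pref f n ∈ C) ∧ ∀ i ∈ I, {n | pref f n ∈ D i}.Infinite}

section WgenLemmas
variable {N : ℕ} {C : Set (List A)} {k : ℕ} {I : Finset (Fin k)} {D : Fin k → Set (List A)}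

lemma Wgen_sound {f : ℕ → A} (h : {n | Wgen N C I D (pref f n)}.Infinite) :
    f ∈ PieceSetGen N C I D := by
  constructor
  · intro n hn
    obtain ⟨b, hb, hnb⟩ := h.exists_gt n
    have := ((Wgen_iff N C I D (pref f b)).1 hb).1 n hn (by simp; omega)
    rwa [pref_take f (by omega)] at this
  · intro i hi
    apply Set.infinite_of_forall_exists_gt
    intro B
    obtain ⟨n₁, hn₁, hBn₁⟩ := h.exists_gt B
    obtain ⟨n₂, hn₂, hn₁₂⟩ := h.exists_gt n₁
    obtain ⟨m, hm, hmD, hnw⟩ := ((Wgen_iff N C I D (pref f n₂)).1 hn₂).2 i hi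
    rw [pref_length] at hm
    have hn₁m : n₁ < m := by
      by_contra hc
      push_neg at hc
      exact hnw n₁ hc (by simp; omega) (by rwa [pref_take f (le_of_lt hn₁₂)])
    refine ⟨m, ?_, by omega⟩
    rwa [pref_take f hm] at hmD

lemma Wgen_complete {f : ℕ → A} (h : f ∈ PieceSetGen N C I D) :
    {n | Wgen N C I D (pref f n)}.Infinite := by
  apply Set.infinite_of_forall_exists_gt
  intro B
  by_contra hno
  push_neg at hno
  have hwit : ∀ n, Wgen N C I D (pref f n) → n ≤ B := by
    intro n hn
    by_contra hc
    exact absurd (hno n hn) (by omega)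
  have hch : ∀ i, ∃ m, i ∈ I → (B < m ∧ pref f m ∈ D i) := by
    intro i
    by_cases hi : i ∈ I
    · obtain ⟨m, hm1, hm2⟩ := (h.2 i hi).exists_gt B
      exact ⟨m, fun _ => ⟨hm2, hm1⟩⟩
    · exact ⟨0, fun hc => absurd hc hi⟩
  choose g hg using hch
  set n := max (B+1) (I.sup g) with hn
  have hBn : B < n := lt_of_lt_of_le (Nat.lt_succ_self B) (le_max_left _ _)
  have : Wgen N C I D (pref f n) := by
    rw [Wgen_iff]
    constructor
    · intro m hNm hmn
      rw [pref_take f (by simpa using hmn)]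
      exact h.1 m hNm
    · intro i hi
      refine ⟨g i, ?_, ?_, ?_⟩
      · simp only [pref_length]
        exact le_trans (Finset.le_sup hi) (le_max_right _ _)
      · rw [pref_take f (le_trans (Finset.le_sup hi) (le_max_right _ _))]
        exact (hg i hi).2
      · intro m' hm' hm'n hW
        rw [pref_take f (by simp at hm'n; omega)] at hW
        have h1 := hwit m' hW
        have h2 := (hg i hi).1
        omega
  exact absurd (hwit n this) (by omega)

end WgenLemmas

abbrev PieceIdx (k : ℕ) := ((Finset (Fin k)) × ℕ) ⊕ ((Fin k) × ℕ)

section master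
variable {k : ℕ} (Sset Tset : Fin k → Set (List A))

noncomputable def pcW (c : PieceIdx k) : List A → Prop :=
  match c with
  | .inl (I, N) => Wgen N {t | ∀ i ∉ I, t ∈ Tset i} I Sset
  | .inr (i, N) => Wgen N {t | t ∉ Sset i} {i} (fun _ => {t | t ∉ Tset i})

def pcP (c : PieceIdx k) : Set (ℕ → A) :=
  match c with
  | .inl (I, N) => PieceSetGen N {t | ∀ i ∉ I, t ∈ Tset i} I Sset
  | .inr (i, N) => PieceSetGen N {t | t ∉ Sset i} {i} (fun _ => {t | t ∉ Tset i})

def sideB (c : PieceIdx k) : Bool := c.isLeft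

lemma pcW_sound (c : PieceIdx k) {f : ℕ → A}
    (h : {n | pcW Sset Tset c (pref f n)}.Infinite) : f ∈ pcP Sset Tset c := by
  match c with
  | .inl (I, N) => exact Wgen_sound h
  | .inr (i, N) => exact Wgen_sound h

lemma pcW_complete (c : PieceIdx k) {f : ℕ → A} (h : f ∈ pcP Sset Tset c) :
    {n | pcW Sset Tset c (pref f n)}.Infinite := by
  match c with
  | .inl (I, N) => exact Wgen_complete h
  | .inr (i, N) => exact Wgen_complete h

variable (P : Set (ℕ → A))
variable (hPch : ∀ f, f ∈ P ↔ ∀ i,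
  {n : ℕ | pref f n ∈ Sset i}.Infinite ∨ ∃ N : ℕ, ∀ n ≥ N, pref f n ∈ Tset i)

include hPch in
lemma pc_side (c : PieceIdx k) (f : ℕ → A) (hf : f ∈ pcP Sset Tset c) :
    (sideB c = true → f ∈ P) ∧ (sideB c = false → f ∉ P) := by
  match c with
  | .inl (I, N) =>
    refine ⟨fun _ => ?_, by simp [sideB]⟩
    rw [hPch]
    intro i
    by_cases hi : i ∈ I
    · exact Or.inl (hf.2 i hi)
    · exact Or.inr ⟨N, fun n hn => hf.1 n hn i hi⟩
  | .inr (i, N) =>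
    refine ⟨by simp [sideB], fun _ => ?_⟩
    rw [hPch]
    push_neg
    refine ⟨i, ?_, ?_⟩
    · apply (Set.finite_Iio N).subset
      intro n hn
      simp only [Set.mem_Iio]
      by_contra hc
      exact (hf.1 n (by omega)) hn
    · intro N'
      obtain ⟨b, hb, hN'b⟩ := (hf.2 i (Finset.mem_singleton_self i)).exists_gt N'
      exact ⟨b, by omega, hb⟩

include hPch in
lemma pc_cover (f : ℕ → A) : ∃ c : PieceIdx k, f ∈ pcP Sset Tset c := by
  by_cases hf : f ∈ P
  · set I : Finset (Fin k) :=
      Finset.univ.filter (fun i => {n : ℕ | pref f n ∈ Sset i}.Infinite) with hI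
    have hch : ∀ i, ∃ N, i ∉ I → ∀ n ≥ N, pref f n ∈ Tset i := by
      intro i
      by_cases hi : i ∈ I
      · exact ⟨0, fun hc => absurd hi hc⟩
      · rcases (hPch f).1 hf i with h | ⟨N, hN⟩
        · exact absurd (by simp [hI, h]) hi
        · exact ⟨N, fun _ => hN⟩
    choose gN hgN using hch
    refine ⟨.inl (I, Finset.univ.sup gN), ?_, ?_⟩
    · intro n hn i hi
      exact hgN i hi n (le_trans (Finset.le_sup (Finset.mem_univ i)) hn)
    · intro i hi
      simp only [hI, Finset.mem_filter] at hi
      exact hi.2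
  · rw [hPch] at hf
    push_neg at hf
    obtain ⟨i, h1, h2⟩ := hf
    obtain ⟨N, hN⟩ := h1.bddAbove
    refine ⟨.inr (i, N + 1), ?_, ?_⟩
    · intro n hn hc
      exact absurd (hN hc) (by omega)
    · intro j hj
      rw [Finset.mem_singleton] at hj
      subst hj
      apply Set.infinite_of_forall_exists_gt
      intro a
      obtain ⟨n, hn1, hn2⟩ := h2 (a + 1)
      exact ⟨n, hn2, by omega⟩

include hPch in
lemma key [Nonempty A] (t : List A) :
    ∃ (t' : List A) (c : PieceIdx k), t <+: t' ∧
      ∀ v, t' <+: v → ∃ f : ℕ → A, pref f v.length = v ∧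
        {n | pcW Sset Tset c (pref f n)}.Infinite := by
  by_contra hno
  push_neg at hno
  have H : ∀ (t' : List A) (c : PieceIdx k), ∃ v, t' <+: v ∧
      (t <+: t' → ∀ f : ℕ → A, pref f v.length = v →
        ¬ {n | pcW Sset Tset c (pref f n)}.Infinite) := by
    intro t' c
    by_cases ht : t <+: t'
    · obtain ⟨v, hv1, hv2⟩ := hno t' c ht
      exact ⟨v, hv1, fun _ f hf => Set.not_infinite.2 (hv2 f hf)⟩
    · exact ⟨t', List.prefix_rfl, fun hc => absurd hc ht⟩
  obtain ⟨σ, hσ⟩ := exists_surjective_nat (PieceIdx k)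
  have a₀ : A := Classical.arbitrary A
  let g : ℕ → List A := fun n => Nat.rec t (fun n ih => (H (ih ++ [a₀]) (σ n)).choose) n
  have hgs : ∀ n, (g n ++ [a₀] <+: g (n+1)) ∧
      (t <+: g n ++ [a₀] → ∀ f : ℕ → A, pref f (g (n+1)).length = g (n+1) →
        ¬ {m | pcW Sset Tset (σ n) (pref f m)}.Infinite) :=
    fun n => (H (g n ++ [a₀]) (σ n)).choose_spec
  have hchain : ∀ n, g n <+: g (n+1) :=
    fun n => (List.prefix_append _ _).trans (hgs n).1
  have hmono : ∀ a b, a ≤ b → g a <+: g b := by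
    intro a b hab
    induction b with
    | zero => simp at hab; subst hab; exact List.prefix_rfl
    | succ b ih =>
      rcases Nat.lt_or_ge a (b+1) with h | h
      · exact (ih (by omega)).trans (hchain b)
      · have : a = b + 1 := by omega
        subst this; exact List.prefix_rfl
  have ht_g : ∀ n, t <+: g n := fun n => hmono 0 n (Nat.zero_le n)
  have hlen : ∀ n, n ≤ (g n).length := by
    intro n
    induction n with
    | zero => exact Nat.zero_le _
    | succ n ih =>
      have h1 := (hgs n).1.length_le
      simp at h1
      omega
  let f : ℕ → A := fun j => (g (j+1)).getD j a₀
  have hfg : ∀ n, pref f (g n).length = g n := by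
    intro n
    apply List.ext_getElem (by simp)
    intro j hj1 hj2
    rw [pref_getElem]
    have hjlt : j < (g (j+1)).length := lt_of_lt_of_le (Nat.lt_succ_self j) (hlen (j+1))
    show (g (j+1)).getD j a₀ = (g n)[j]
    rw [List.getD_eq_getElem _ _ hjlt]
    rcases le_total n (j+1) with h | h
    · exact ((hmono n (j+1) h).getElem hj2).symm
    · exact (hmono (j+1) n h).getElem hjlt
  have hbad : ∀ c : PieceIdx k, ¬ {n | pcW Sset Tset c (pref f n)}.Infinite := by
    intro c
    obtain ⟨n, hn⟩ := hσ c
    have := (hgs n).2 ((ht_g n).trans (List.prefix_append _ _)) f (hfg (n+1))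
    rwa [hn] at this
  obtain ⟨c, hc⟩ := pc_cover Sset Tset P hPch f
  exact hbad c (pcW_complete Sset Tset c hc)

end master
-- appended to full.lean inside namespace RMon, after `key`
section final
variable {k : ℕ} (Sset Tset : Fin k → Set (List A)) (P : Set (ℕ → A))

include Sset Tset in
lemma master [Nonempty A] [Countable A]
    (hPch : ∀ f, f ∈ P ↔ ∀ i,
      {n : ℕ | pref f n ∈ Sset i}.Infinite ∨ ∃ N : ℕ, ∀ n ≥ N, pref f n ∈ Tset i) :
    ∃ u : List A → Option Bool,
      (∀ f : ℕ → A,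
        ¬({n : ℕ | u (pref f n) = some true}.Infinite ∧
          {n : ℕ | u (pref f n) = some false}.Infinite)) ∧
      (∀ (f : ℕ → A) (b : Bool),
        {n : ℕ | u (pref f n) = some b}.Infinite →
        {n : ℕ | u (pref f n) = some (!b)}.Finite →
        (b = true ↔ f ∈ P)) ∧
      (∀ s : List A, ∃ f : ℕ → A,
        {n : ℕ | u (pref (ext s f) n) = some (decide (ext s f ∈ P))}.Infinite ∧
        {n : ℕ | u (pref (ext s f) n) = some (!(decide (ext s f ∈ P)))}.Finite) := by
  obtain ⟨ε, hε⟩ := exists_surjective_nat (List A)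
  have hkey : ∀ m : ℕ, ∃ (t' : List A) (c : PieceIdx k), ε m <+: t' ∧
      ∀ v, t' <+: v → ∃ f : ℕ → A, pref f v.length = v ∧
        {n | pcW Sset Tset c (pref f n)}.Infinite :=
    fun m => key Sset Tset P hPch (ε m)
  choose Tn cc hTn hDense using hkey
  obtain ⟨u, hu⟩ : ∃ u : List A → Option Bool, ∀ t, u t =
      (if h : {m | Tn m <+: t}.Nonempty then
        (if pcW Sset Tset (cc (sInf {m | Tn m <+: t})) t then
          some (sideB (cc (sInf {m | Tn m <+: t}))) else none)
      else none) := ⟨_, fun t => rfl⟩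
  -- stabilization
  have stab : ∀ f : ℕ → A, {m | pref f (Tn m).length = Tn m}.Nonempty →
      ∀ n, (Tn (sInf {m | pref f (Tn m).length = Tn m})).length ≤ n →
      u (pref f n) =
        (if pcW Sset Tset (cc (sInf {m | pref f (Tn m).length = Tn m})) (pref f n) then
          some (sideB (cc (sInf {m | pref f (Tn m).length = Tn m}))) else none) := by
    intro f hRf n hn
    set Rf := {m | pref f (Tn m).length = Tn m} with hRfdef
    set Aset := {m | Tn m <+: pref f n} with hAdef
    have hA_sub : Aset ⊆ Rf := by
      intro m hm
      exact (prefix_pref_iff.1 hm).2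
    have hmem : sInf Rf ∈ Aset := by
      rw [hAdef, Set.mem_setOf_eq, prefix_pref_iff]
      exact ⟨hn, Nat.sInf_mem hRf⟩
    have hAne : Aset.Nonempty := ⟨_, hmem⟩
    have hinf_eq : sInf Aset = sInf Rf :=
      le_antisymm (Nat.sInf_le hmem) (Nat.sInf_le (hA_sub (Nat.sInf_mem hAne)))
    rw [hu, dif_pos hAne, hinf_eq]
  -- soundness
  have uSound : ∀ (f : ℕ → A) (b : Bool), {n | u (pref f n) = some b}.Infinite →
      (b = true → f ∈ P) ∧ (b = false → f ∉ P) := by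
    intro f b hinf
    have hRf : {m | pref f (Tn m).length = Tn m}.Nonempty := by
      by_contra hc
      obtain ⟨n, hn⟩ := hinf.nonempty
      have hne : ¬ {m | Tn m <+: pref f n}.Nonempty := by
        rintro ⟨m, hm⟩
        exact hc ⟨m, (prefix_pref_iff.1 hm).2⟩
      rw [Set.mem_setOf_eq, hu, dif_neg hne] at hn
      exact nomatch hn
    set M := sInf {m | pref f (Tn m).length = Tn m} with hM
    have hinf' := hinf.diff (Set.finite_Iio (Tn M).length)
    obtain ⟨n, hn⟩ := hinf'.nonempty
    have hn2 : (Tn M).length ≤ n := by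
      have := hn.2
      simp only [Set.mem_Iio, not_lt] at this
      exact this
    have hn1 : u (pref f n) = some b := hn.1
    rw [stab f hRf n hn2] at hn1
    have hb : b = sideB (cc M) := by
      by_cases hw : pcW Sset Tset (cc M) (pref f n)
      · rw [if_pos hw] at hn1
        exact (Option.some_inj.1 hn1).symm
      · rw [if_neg hw] at hn1
        exact nomatch hn1
    have hWinf : {n | pcW Sset Tset (cc M) (pref f n)}.Infinite := by
      apply Set.Infinite.mono ?_ hinf'
      intro x hx
      have hx2 : (Tn M).length ≤ x := by
        have := hx.2
        simp only [Set.mem_Iio, not_lt] at this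
        exact this
      have hx1 : u (pref f x) = some b := hx.1
      rw [stab f hRf x hx2] at hx1
      by_contra hc
      simp only [Set.mem_setOf_eq] at hc
      rw [if_neg hc] at hx1
      exact nomatch hx1
    have hPc := pcW_sound Sset Tset (cc M) hWinf
    have hside := pc_side Sset Tset P hPch (cc M) f hPc
    constructor
    · intro hbt
      exact hside.1 (by rw [← hb, hbt])
    · intro hbf
      exact hside.2 (by rw [← hb, hbf])
  refine ⟨u, ?_, ?_, ?_⟩
  · rintro f ⟨h1, h2⟩
    exact (uSound f false h2).2 rfl ((uSound f true h1).1 rfl)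
  · intro f b hinf _
    cases b with
    | false => exact iff_of_false (by simp) ((uSound f false hinf).2 rfl)
    | true => exact iff_of_true rfl ((uSound f true hinf).1 rfl)
  · intro s
    obtain ⟨ms, hms⟩ := hε s
    have hsC : s <+: Tn ms := by rw [← hms]; exact hTn ms
    set Cs := {m | Tn m <+: s ∨ s <+: Tn m} with hCs
    have hCne : Cs.Nonempty := ⟨ms, Or.inr hsC⟩
    set M := sInf Cs with hMdef
    have hM : Tn M <+: s ∨ s <+: Tn M := Nat.sInf_mem hCne
    set v := if Tn M <+: s then s else Tn M with hv
    have hsv : s <+: v ∧ Tn M <+: v := by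
      by_cases h : Tn M <+: s
      · rw [hv, if_pos h]; exact ⟨List.prefix_rfl, h⟩
      · rw [hv, if_neg h]; exact ⟨hM.resolve_left h, List.prefix_rfl⟩
    obtain ⟨F, hF1, hF2⟩ := hDense M v hsv.2
    have hsF : pref F s.length = s := by
      have : s <+: pref F v.length := by rw [hF1]; exact hsv.1
      exact (prefix_pref_iff.1 this).2
    have hTF : pref F (Tn M).length = Tn M := by
      have : Tn M <+: pref F v.length := by rw [hF1]; exact hsv.2
      exact (prefix_pref_iff.1 this).2
    have hRfF : M ∈ {m | pref F (Tn m).length = Tn m} := hTF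
    have hRsub : {m | pref F (Tn m).length = Tn m} ⊆ Cs := by
      intro m hm
      have h1 : Tn m <+: pref F (max (Tn m).length s.length) := by
        rw [prefix_pref_iff]
        exact ⟨le_max_left _ _, hm⟩
      have h2 : s <+: pref F (max (Tn m).length s.length) := by
        rw [prefix_pref_iff]
        exact ⟨le_max_right _ _, hsF⟩
      exact List.prefix_or_prefix_of_prefix h1 h2
    have hMeq : sInf {m | pref F (Tn m).length = Tn m} = M :=
      le_antisymm (Nat.sInf_le hRfF) (Nat.sInf_le (hRsub (Nat.sInf_mem ⟨M, hRfF⟩)))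
    have hstab := stab F ⟨M, hRfF⟩
    rw [hMeq] at hstab
    have hPc : F ∈ pcP Sset Tset (cc M) := pcW_sound Sset Tset (cc M) hF2
    have hside := pc_side Sset Tset P hPch (cc M) F hPc
    have hbval : decide (F ∈ P) = sideB (cc M) := by
      cases hsb : sideB (cc M) with
      | false => simp [hside.2 hsb]
      | true => simp [hside.1 hsb]
    refine ⟨fun n => F (n + s.length), ?_⟩
    rw [ext_eq_self hsF]
    constructor
    · apply Set.Infinite.mono ?_ (hF2.diff (Set.finite_Iio (Tn M).length))
      intro x hx
      have hx2 : (Tn M).length ≤ x := by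
        have := hx.2
        simp only [Set.mem_Iio, not_lt] at this
        exact this
      show u (pref F x) = some (decide (F ∈ P))
      have hxw : pcW Sset Tset (cc M) (pref F x) := hx.1
      rw [hstab x hx2, if_pos hxw, hbval]
    · apply (Set.finite_Iio (Tn M).length).subset
      intro x hx
      rw [Set.mem_setOf_eq] at hx
      rw [Set.mem_Iio]
      by_contra hc
      push_neg at hc
      rw [hstab x hc] at hx
      by_cases hw : pcW Sset Tset (cc M) (pref F x)
      · rw [if_pos hw] at hx
        have := Option.some_inj.1 hx
        rw [hbval] at this
        cases hsb : sideB (cc M) <;> rw [hsb] at this <;> simp at this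
      · rw [if_neg hw] at hx
        exact nomatch hx

end final
end RMon

theorem reactivity_existentially_monitorable {A : Type*} [Fintype A] [Nonempty A]
    (P : Set (ℕ → A)) (hP : Reactivity P) :
    ∃ u : List A → Option Bool,
      (∀ f : ℕ → A,
        ¬({n : ℕ | u (pref f n) = some true}.Infinite ∧
          {n : ℕ | u (pref f n) = some false}.Infinite)) ∧
      (∀ (f : ℕ → A) (b : Bool),
        {n : ℕ | u (pref f n) = some b}.Infinite →
        {n : ℕ | u (pref f n) = some (!b)}.Finite →
        (b = true ↔ f ∈ P)) ∧
      (∀ s : List A, ∃ f : ℕ → A,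
        {n : ℕ | u (pref (ext s f) n) = some (decide (ext s f ∈ P))}.Infinite ∧
        {n : ℕ | u (pref (ext s f) n) = some (!(decide (ext s f ∈ P)))}.Finite) := by
  obtain ⟨k, hk, R, Q, hR, hQ, hPeq⟩ := hP
  choose Sset hS using hR
  choose Tset hT using hQ
  have hPch : ∀ f, f ∈ P ↔ ∀ i,
      {n : ℕ | pref f n ∈ Sset i}.Infinite ∨ ∃ N : ℕ, ∀ n ≥ N, pref f n ∈ Tset i := by
    intro f
    rw [hPeq]
    simp only [Set.mem_iInter, Set.mem_union]
    constructor
    · intro h i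
      rcases h i with h' | h'
      · exact Or.inl ((hS i f).1 h')
      · exact Or.inr ((hT i f).1 h')
    · intro h i
      rcases h i with h' | h'
      · exact Or.inl ((hS i f).2 h')
      · exact Or.inr ((hT i f).2 h')
  exact RMon.master Sset Tset P hPch
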